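/- If λ = (λ_1, ..., λ_n) ∈ Γ_k with λ_1 ≥ ... ≥ λ_n, then at most n - k entries of λ are negative; moreover λ_k + λ_{k+1} + ... + λ_n > 0 and |λ_i| ≤ n · λ_k for every i > k. -/

import Mathlib

open Finset

noncomputable def esym {n : ℕ} (k : ℕ) (lam : Fin n → ℝ) : ℝ :=
  ∑ s ∈ Finset.univ.powersetCard k, ∏ i ∈ s, lam i

noncomputable def esym1 {n : ℕ} (k : ℕ) (lam : Fin n → ℝ) (i : Fin n) : ℝ :=
  ∑ s ∈ (Finset.univ.erase i).powersetCard k, ∏ j ∈ s, lam j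

noncomputable def esym2 {n : ℕ} (k : ℕ) (lam : Fin n → ℝ) (i j : Fin n) : ℝ :=
  ∑ s ∈ ((Finset.univ.erase i).erase j).powersetCard k, ∏ l ∈ s, lam l

def GardingCone (n k : ℕ) : Set (Fin n → ℝ) :=
  {lam | ∀ j : ℕ, 1 ≤ j → j ≤ k → 0 < esym j lam}

open Polynomial

namespace Stmt7Aux

noncomputable def mpol (M : Multiset ℝ) : ℝ[X] := (M.map (fun a => X + C a)).prod

def Gam (k : ℕ) (M : Multiset ℝ) : Prop := ∀ j : ℕ, 1 ≤ j → j ≤ k → 0 < M.esymm j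

lemma esymm_zero' (M : Multiset ℝ) : M.esymm 0 = 1 := by simp [Multiset.esymm]

lemma esymm_one' (M : Multiset ℝ) : M.esymm 1 = M.sum := by
  simp [Multiset.esymm, Multiset.powersetCard_one]

lemma msum_pos {s : Multiset ℝ} (h : ∀ x ∈ s, 0 < x) (h0 : s ≠ 0) : 0 < s.sum := by
  obtain ⟨a, ha⟩ := Multiset.exists_mem_of_ne_zero h0
  rw [← Multiset.cons_erase ha, Multiset.sum_cons]
  have h1 : 0 ≤ (s.erase a).sum := Multiset.sum_nonneg fun x hx =>
    (h x (Multiset.mem_of_mem_erase hx)).le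
  have := h a ha
  linarith

lemma esymm_pos {M : Multiset ℝ} (h : ∀ a ∈ M, 0 < a) {j : ℕ} (hj : j ≤ Multiset.card M) :
    0 < M.esymm j := by
  rw [Multiset.esymm]
  apply msum_pos
  · intro x hx
    obtain ⟨t, ht, rfl⟩ := Multiset.mem_map.1 hx
    exact Multiset.prod_pos fun a ha =>
      h a (Multiset.mem_of_le (Multiset.mem_powersetCard.1 ht).1 ha)
  · simp only [ne_eq, Multiset.map_eq_zero, ← Multiset.card_eq_zero,
      Multiset.card_powersetCard]
    rw [Multiset.card_map, Multiset.card_powersetCard]; exact (Nat.choose_pos hj).ne'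



lemma mpol_monic : (mpol M).Monic :=
  monic_multiset_prod_of_monic _ _ (fun a _ => monic_X_add_C a)

lemma mpol_natDegree : (mpol M).natDegree = Multiset.card M := by
  rw [mpol, natDegree_multiset_prod_of_monic]
  · rw [Multiset.map_map]
    have : (Multiset.map (natDegree ∘ fun a => X + C a) M) = Multiset.map (fun _ => 1) M := by
      apply Multiset.map_congr rfl
      intro a _
      simp [natDegree_X_add_C]
    rw [this, Multiset.map_const', Multiset.sum_replicate, smul_eq_mul, mul_one]
  · intro f hf
    obtain ⟨a, _, rfl⟩ := Multiset.mem_map.1 hf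
    exact monic_X_add_C a

lemma mpol_splits : (mpol M).Splits := by
  rw [mpol]
  induction M using Multiset.induction with
  | empty => simpa using Splits.one
  | cons a t ih =>
    rw [Multiset.map_cons, Multiset.prod_cons]
    exact Splits.mul (Splits.of_natDegree_le_one (natDegree_X_add_C a).le) ih

lemma mpol_coeff {j : ℕ} (hj : j ≤ Multiset.card M) :
    (mpol M).coeff j = M.esymm (Multiset.card M - j) :=
  Multiset.prod_X_add_C_coeff M hj

lemma splits_derivative (p : ℝ[X]) (hp : p.Splits) :
    (derivative p).Splits := by
  rcases eq_or_ne p.natDegree 0 with h0 | h0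
  · rw [derivative_of_natDegree_zero h0]; exact Splits.zero
  · rw [splits_iff_card_roots] at hp ⊢
    have h1 := p.card_roots_le_derivative
    have h2 := (derivative p).card_roots'
    have h3 := p.natDegree_derivative_le
    omega

lemma splits_iterate (p : ℝ[X]) (hp : p.Splits) (r : ℕ) :
    (derivative^[r] p).Splits := by
  induction r with
  | zero => exact hp
  | succ r ih => rw [Function.iterate_succ_apply']; exact splits_derivative _ ih

lemma iter_coeff_top {p : ℝ[X]} (hm : p.Monic) {r : ℕ} (hr : r ≤ p.natDegree) :
    (derivative^[r] p).coeff (p.natDegree - r) = (p.natDegree.descFactorial r : ℝ) := by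
  rw [coeff_iterate_derivative, Nat.sub_add_cancel hr, hm.coeff_natDegree, nsmul_eq_mul, mul_one]

lemma iter_natDegree {p : ℝ[X]} (hm : p.Monic) {r : ℕ} (hr : r ≤ p.natDegree) :
    (derivative^[r] p).natDegree = p.natDegree - r := by
  refine le_antisymm (natDegree_iterate_derivative p r) (le_natDegree_of_ne_zero ?_)
  rw [iter_coeff_top hm hr]
  have : 0 < p.natDegree.descFactorial r := by
    by_contra h
    rw [Nat.not_lt, Nat.le_zero, Nat.descFactorial_eq_zero_iff_lt] at h
    omega
  positivity

lemma iter_leadingCoeff_pos {p : ℝ[X]} (hm : p.Monic) {r : ℕ} (hr : r ≤ p.natDegree) :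
    0 < (derivative^[r] p).leadingCoeff := by
  rw [leadingCoeff, iter_natDegree hm hr, iter_coeff_top hm hr]
  have : 0 < p.natDegree.descFactorial r := by
    by_contra h
    rw [Nat.not_lt, Nat.le_zero, Nat.descFactorial_eq_zero_iff_lt] at h
    omega
  exact_mod_cast this

lemma eval_pos_of_roots_lt {p : ℝ[X]} (hs : p.Splits) (hl : 0 < p.leadingCoeff)
    {t : ℝ} (h : ∀ r ∈ p.roots, r < t) : 0 < p.eval t := by
  have hrep := hs.eq_prod_roots
  have : p.eval t = p.leadingCoeff * ((p.roots.map (fun a => t - a)).prod) := by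
    conv_lhs => rw [hrep]
    rw [eval_mul, eval_C, eval_multiset_prod, Multiset.map_map]
    congr 2
    apply Multiset.map_congr rfl
    intro a _
    simp
  rw [this]
  apply mul_pos hl
  apply Multiset.prod_pos
  intro x hx
  obtain ⟨a, ha, rfl⟩ := Multiset.mem_map.1 hx
  linarith [h a ha]



lemma eval_derivative_pos {p : ℝ[X]} (hs : p.Splits) (hl : 0 < p.leadingCoeff)
    (hd : 0 < p.natDegree) {t : ℝ} (h : ∀ r ∈ p.roots, r < t) :
    0 < (derivative p).eval t := by
  classical
  have hrep := hs.eq_prod_roots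
  have hd' : derivative p = C p.leadingCoeff *
      (Multiset.map (fun i => (Multiset.map (fun a => X - C a) (p.roots.erase i)).prod *
        derivative (X - C i)) p.roots).sum := by
    conv_lhs => rw [hrep]
    rw [derivative_C_mul, derivative_prod]
  rw [hd', eval_mul, eval_C]
  apply mul_pos hl
  rw [show ∀ q : ℝ[X], q.eval t = evalRingHom t q from fun _ => rfl,
    map_multiset_sum (evalRingHom t)]
  apply msum_pos
  · intro x hx
    rw [Multiset.map_map] at hx
    obtain ⟨i, hi, rfl⟩ := Multiset.mem_map.1 hx
    simp only [Function.comp_apply, coe_evalRingHom, eval_mul, derivative_sub, derivative_X,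
      derivative_C, sub_zero, eval_one, mul_one, eval_multiset_prod, Multiset.map_map]
    apply Multiset.prod_pos
    intro y hy
    obtain ⟨a, ha, rfl⟩ := Multiset.mem_map.1 hy
    have : a ∈ p.roots := Multiset.mem_of_mem_erase ha
    simp only [Function.comp_apply, eval_sub, eval_X, eval_C]
    linarith [h a this]
  · have hne : p.roots ≠ 0 := by
      intro h0
      have := (splits_iff_card_roots.1 hs)
      rw [h0] at this
      simp at this
      omega
    simp only [ne_eq, Multiset.map_eq_zero]
    exact hne

lemma iterate_deriv_linear_mul (a : ℝ) (g : ℝ[X]) (r : ℕ) :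
    derivative^[r+1] ((X + C a) * g) =
      (X + C a) * derivative^[r+1] g + ((r+1 : ℕ) : ℝ[X]) * derivative^[r] g := by
  induction r with
  | zero =>
    simp [derivative_mul]
    ring
  | succ r ih =>
    rw [Function.iterate_succ_apply', ih, derivative_add, derivative_mul, derivative_mul,
      derivative_natCast]
    simp only [derivative_add, derivative_X, derivative_C, add_zero, zero_add, one_mul, zero_mul]
    rw [← Function.iterate_succ_apply' derivative r g, ← Function.iterate_succ_apply' derivative (r+1) g]
    push_cast
    ring

lemma eval_q_pos {M : Multiset ℝ} {k : ℕ} (hk : k ≤ Multiset.card M) (hG : Gam k M)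
    {t : ℝ} (ht : 0 ≤ t) :
    0 < (derivative^[Multiset.card M - k] (mpol M)).eval t := by
  set n := Multiset.card M with hn
  set q := derivative^[n - k] (mpol M) with hq
  have hnd : q.natDegree = k := by
    rw [hq, iter_natDegree (mpol_monic) (by rw [mpol_natDegree]; omega), mpol_natDegree]
    omega
  have hcoeff : ∀ i : ℕ, i ≤ k → 0 < q.coeff i := by
    intro i hi
    rw [hq, coeff_iterate_derivative, mpol_coeff (show i + (n - k) ≤ Multiset.card M by omega)]
    have he : Multiset.card M - (i + (n - k)) = k - i := by omega
    rw [he]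
    have hpos : 0 < M.esymm (k - i) := by
      rcases Nat.eq_or_lt_of_le hi with h | h
      · rw [h, Nat.sub_self, esymm_zero']; norm_num
      · exact hG (k - i) (by omega) (by omega)
    have hdpos : 0 < (i + (n - k)).descFactorial (n - k) := by
      by_contra hcon
      rw [Nat.not_lt, Nat.le_zero, Nat.descFactorial_eq_zero_iff_lt] at hcon
      omega
    calc (0:ℝ) < ((i + (n - k)).descFactorial (n - k) : ℝ) * M.esymm (k - i) := by
          apply mul_pos _ hpos
          exact_mod_cast hdpos
      _ = (i + (n - k)).descFactorial (n - k) • M.esymm (k - i) := by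
          rw [nsmul_eq_mul]
  rw [eval_eq_sum_range, hnd]
  apply Finset.sum_pos'
  · intro i hi
    rw [Finset.mem_range] at hi
    exact mul_nonneg (hcoeff i (by omega)).le (pow_nonneg ht i)
  · refine ⟨0, Finset.mem_range.2 (by omega), ?_⟩
    simpa using hcoeff 0 (by omega)

lemma mpol_map_neg (s : Multiset ℝ) :
    mpol (s.map (fun a => -a)) = (s.map (fun a => X - C a)).prod := by
  rw [mpol, Multiset.map_map]
  apply congrArg
  apply Multiset.map_congr rfl
  intro a _
  simp [sub_eq_add_neg]

lemma gam_of_roots_neg {M : Multiset ℝ} {k : ℕ} (hk : k ≤ Multiset.card M)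
    (hroots : ∀ ρ ∈ (derivative^[Multiset.card M - k] (mpol M)).roots, ρ < 0) : Gam k M := by
  set n := Multiset.card M with hn
  set q := derivative^[n - k] (mpol M) with hq
  have hmd : (mpol M).natDegree = n := mpol_natDegree
  have hr : n - k ≤ (mpol M).natDegree := by omega
  have hsplits : q.Splits := splits_iterate _ mpol_splits _
  have hlead : 0 < q.leadingCoeff := iter_leadingCoeff_pos mpol_monic hr
  have hnd : q.natDegree = k := by rw [hq, iter_natDegree mpol_monic hr, hmd]; omega
  have hcard : Multiset.card q.roots = k := by rw [splits_iff_card_roots.1 hsplits, hnd]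
  -- represent q via its roots
  have hNcard : Multiset.card (q.roots.map (fun a => -a)) = k := by
    rw [Multiset.card_map, hcard]
  have hNpos : ∀ b ∈ q.roots.map (fun a => -a), 0 < b := by
    intro b hb
    obtain ⟨a, ha, rfl⟩ := Multiset.mem_map.1 hb
    have := hroots a ha
    linarith
  have hrep : q = C q.leadingCoeff * mpol (q.roots.map (fun a => -a)) := by
    conv_lhs => rw [hsplits.eq_prod_roots]
    rw [mpol_map_neg]
  intro j hj1 hjk
  -- coefficient of q at k - j, two ways
  have hc2 : q.coeff (k - j) = q.leadingCoeff * (q.roots.map (fun a => -a)).esymm j := by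
    have harg : Multiset.card (Multiset.map (fun a => -a) q.roots) - (k - j) = j := by
      rw [hNcard]; omega
    conv_lhs => rw [hrep]
    rw [coeff_C_mul,
      mpol_coeff (show k - j ≤ Multiset.card (Multiset.map (fun a => -a) q.roots) by
        rw [hNcard]; omega), harg]
  have hc1 : q.coeff (k - j) = ((k - j) + (n - k)).descFactorial (n - k) • M.esymm j := by
    rw [hq, coeff_iterate_derivative, mpol_coeff (show (k - j) + (n - k) ≤ Multiset.card M by omega)]
    congr 2
    omega
  have hpos2 : 0 < q.coeff (k - j) :=
    hc2 ▸ mul_pos hlead (esymm_pos hNpos (by rw [hNcard]; omega))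
  rw [hc1, nsmul_eq_mul] at hpos2
  by_contra hcon
  push_neg at hcon
  have hd : (0:ℝ) ≤ (((k - j) + (n - k)).descFactorial (n - k) : ℝ) := by positivity
  nlinarith

lemma gam_cons {a : ℝ} {M : Multiset ℝ} {k : ℕ} (hk : 1 ≤ k)
    (hcard : k ≤ Multiset.card M + 1) (hG : Gam k (a ::ₘ M)) : Gam (k-1) M := by
  have hcardcons : Multiset.card (a ::ₘ M) = Multiset.card M + 1 := by
    rw [Multiset.card_cons]
  rcases Nat.lt_or_ge (Multiset.card M) k with hbig | hsmall
  · -- k = card M + 1 : all entries positive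
    have hall : ∀ b ∈ (a ::ₘ M), 0 < b := by
      intro b hb
      by_contra hle
      push_neg at hle
      have hpos := eval_q_pos (M := a ::ₘ M) (k := k)
        (by omega) hG (t := -b) (by linarith)
      rw [show Multiset.card (a ::ₘ M) - k = 0 by omega] at hpos
      simp only [Function.iterate_zero_apply, mpol, eval_multiset_prod,
        Multiset.map_map] at hpos
      have h0 : ((a ::ₘ M).map (eval (-b) ∘ fun a => X + C a)).prod = 0 := by
        apply Multiset.prod_eq_zero
        refine Multiset.mem_map.2 ⟨b, hb, ?_⟩
        simp
      rw [h0] at hpos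
      exact lt_irrefl _ hpos
    intro j hj1 hj2
    exact esymm_pos (fun b hb => hall b (Multiset.mem_cons_of_mem hb)) (by omega)
  · -- main case : k ≤ card M
    rcases Nat.eq_or_lt_of_le hk with hk1 | hk2
    · intro j hj1 hj2; omega
    -- now 2 ≤ k; but the argument below works for any k ≥ 1 anyway
    apply gam_of_roots_neg (k := k - 1) (by omega)
    intro ρ₀ hρ₀
    by_contra hneg
    push_neg at hneg
    set n : ℕ := Multiset.card M + 1 with hn
    set G : ℝ[X] := derivative^[Multiset.card M - (k - 1)] (mpol M) with hGdef
    have hiter : Multiset.card M - (k - 1) = n - k := by omega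
    have hGsplits : G.Splits := splits_iterate _ mpol_splits _
    have hGlead : 0 < G.leadingCoeff := iter_leadingCoeff_pos mpol_monic (by rw [mpol_natDegree]; omega)
    have hGnd : G.natDegree = k - 1 := by
      rw [hGdef, iter_natDegree mpol_monic (by rw [mpol_natDegree]; omega), mpol_natDegree]
      omega
    have hGne : G ≠ 0 := fun h => by simp [h] at hGlead
    set H : ℝ[X] := derivative^[n - k - 1] (mpol M) with hHdef
    have hHsplits : H.Splits := splits_iterate _ mpol_splits _
    have hHlead : 0 < H.leadingCoeff := iter_leadingCoeff_pos mpol_monic (by rw [mpol_natDegree]; omega)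
    have hHnd : H.natDegree = k := by
      rw [hHdef, iter_natDegree mpol_monic (by rw [mpol_natDegree]; omega), mpol_natDegree]
      omega
    have hHne : H ≠ 0 := fun h => by simp [h] at hHlead
    have hGH : G = derivative H := by
      rw [hGdef, hHdef, hiter, ← Function.iterate_succ_apply' derivative (n - k - 1) (mpol M)]
      congr 1
      omega
    -- max root of G
    have hρ₀' : ρ₀ ∈ G.roots.toFinset := Multiset.mem_toFinset.2 hρ₀
    set ρ : ℝ := G.roots.toFinset.max' ⟨ρ₀, hρ₀'⟩ with hρdef
    have hρmem : ρ ∈ G.roots := Multiset.mem_toFinset.1 (Finset.max'_mem _ _)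
    have hρmax : ∀ x ∈ G.roots, x ≤ ρ := fun x hx =>
      Finset.le_max' _ x (Multiset.mem_toFinset.2 hx)
    have hρ0 : 0 ≤ ρ := le_trans hneg (Finset.le_max' _ _ hρ₀')
    have hGeval : G.eval ρ = 0 := (mem_roots'.1 hρmem).2
    -- F and the product rule
    have hF := eval_q_pos (M := a ::ₘ M) (k := k) (by omega) hG (t := ρ) hρ0
    rw [hcardcons] at hF
    have hfac : mpol (a ::ₘ M) = (X + C a) * mpol M := by
      simp only [mpol, Multiset.map_cons, Multiset.prod_cons]
    have hFrep : derivative^[Multiset.card M + 1 - k] (mpol (a ::ₘ M)) =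
        (X + C a) * G + ((n - k : ℕ) : ℝ[X]) * H := by
      rw [hfac, show Multiset.card M + 1 - k = (n - k - 1) + 1 by omega,
        iterate_deriv_linear_mul, show (n - k - 1) + 1 = n - k by omega, hGdef, hHdef, hiter]
    rw [hFrep] at hF
    simp only [eval_add, eval_mul, eval_X, eval_C, hGeval, mul_zero, zero_add,
      eval_natCast] at hF
    have hnk : 0 < n - k := by omega
    have hHeval : 0 < H.eval ρ := by
      have : (0:ℝ) < (n - k : ℕ) := by exact_mod_cast hnk
      nlinarith
    -- H strictly monotone on [ρ, ∞)
    have hmono : StrictMonoOn (fun x => H.eval x) (Set.Ici ρ) := by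
      apply strictMonoOn_of_deriv_pos (convex_Ici ρ)
        ((Polynomial.continuous H).continuousOn)
      intro x hx
      rw [interior_Ici, Set.mem_Ioi] at hx
      rw [Polynomial.deriv, ← hGH]
      exact eval_pos_of_roots_lt hGsplits hGlead
        (fun r hr => lt_of_le_of_lt (hρmax r hr) hx)
    -- max root of H
    have hHroots : H.roots ≠ 0 := by
      intro h0
      have := splits_iff_card_roots.1 hHsplits
      rw [h0, hHnd] at this
      simp at this
      omega
    obtain ⟨x₀', hx₀'⟩ := Multiset.exists_mem_of_ne_zero hHroots
    set x₀ : ℝ := H.roots.toFinset.max' ⟨x₀', Multiset.mem_toFinset.2 hx₀'⟩ with hx₀def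
    have hx₀mem : x₀ ∈ H.roots := Multiset.mem_toFinset.1 (Finset.max'_mem _ _)
    have hx₀max : ∀ x ∈ H.roots, x ≤ x₀ := fun x hx =>
      Finset.le_max' _ x (Multiset.mem_toFinset.2 hx)
    have hx₀eval : H.eval x₀ = 0 := (mem_roots'.1 hx₀mem).2
    rcases lt_or_ge x₀ ρ with hcase | hcase
    · -- all roots of H are < ρ : derivative positive at ρ, contradiction
      have := eval_derivative_pos hHsplits hHlead (by rw [hHnd]; omega) 
        (fun r hr => lt_of_le_of_lt (hx₀max r hr) hcase)
      rw [← hGH, hGeval] at this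
      exact lt_irrefl _ this
    · rcases eq_or_lt_of_le hcase with heq | hlt
      · rw [heq] at hHeval
        rw [hx₀eval] at hHeval
        exact lt_irrefl _ hHeval
      · have h2 := hmono (Set.mem_Ici.2 le_rfl) (Set.mem_Ici.2 hcase) hlt
        change H.eval ρ < H.eval x₀ at h2
        rw [hx₀eval] at h2
        linarith

lemma suffix_sum_pos : ∀ (k : ℕ) (l : List ℝ), k + 1 ≤ l.length → Gam (k+1) ↑l →
    0 < (l.drop k).sum := by
  intro k
  induction k with
  | zero =>
    intro l hlen hG
    have := hG 1 le_rfl le_rfl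
    rw [esymm_one'] at this
    simpa using this
  | succ k ih =>
    intro l hlen hG
    match l with
    | [] => simp at hlen
    | a :: l' =>
      have hG' : Gam (k+1) ↑l' := by
        have h1 : Gam (k+2) (a ::ₘ (↑l' : Multiset ℝ)) := by
          rwa [Multiset.cons_coe]
        have h2 := gam_cons (a := a) (M := (↑l' : Multiset ℝ)) (k := k+2) (by omega)
          (by simp; simpa using hlen) h1
        simpa using h2
      have := ih l' (by simpa using hlen) hG'
      simpa [List.drop_succ_cons] using this

lemma filter_sum_eq_drop {n : ℕ} (lam : Fin n → ℝ) :
    ∀ c : ℕ, ∑ i ∈ Finset.univ.filter (fun i : Fin n => c ≤ (i : ℕ)), lam i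
      = ((List.ofFn lam).drop c).sum := by
  intro c
  induction c with
  | zero =>
    rw [Finset.filter_true_of_mem (fun i _ => Nat.zero_le _), List.drop_zero, List.sum_ofFn]
  | succ c ih =>
    rcases Nat.lt_or_ge c n with hc | hc
    · have hdrop : (List.ofFn lam).drop c = lam ⟨c, hc⟩ :: (List.ofFn lam).drop (c+1) := by
        rw [List.drop_eq_getElem_cons (by simpa using hc)]
        congr 1
        simp
      have hfil : Finset.univ.filter (fun i : Fin n => c ≤ (i : ℕ))
          = insert (⟨c, hc⟩ : Fin n) (Finset.univ.filter (fun i : Fin n => c + 1 ≤ (i : ℕ))) := by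
        ext i
        simp only [Finset.mem_filter, Finset.mem_univ, true_and, Finset.mem_insert, Fin.ext_iff]
        omega
      rw [hfil, Finset.sum_insert (by simp), hdrop, List.sum_cons] at ih
      linarith
    · have h1 : (List.ofFn lam).drop (c+1) = [] :=
        List.drop_eq_nil_of_le (by simp; omega)
      have h2 : Finset.univ.filter (fun i : Fin n => c + 1 ≤ (i : ℕ)) = ∅ := by
        ext i
        simp only [Finset.mem_filter, Finset.mem_univ, true_and, Finset.notMem_empty,
          iff_false, not_le]
        omega
      rw [h1, h2]
      simp

lemma card_filter_le (n c : ℕ) :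
    (Finset.univ.filter (fun i : Fin n => c ≤ (i : ℕ))).card = n - c := by
  induction c with
  | zero =>
    rw [Finset.filter_true_of_mem (fun i _ => Nat.zero_le _)]
    simp
  | succ c ih =>
    rcases Nat.lt_or_ge c n with hc | hc
    · have hfil : Finset.univ.filter (fun i : Fin n => c ≤ (i : ℕ))
          = insert (⟨c, hc⟩ : Fin n) (Finset.univ.filter (fun i : Fin n => c + 1 ≤ (i : ℕ))) := by
        ext i
        simp only [Finset.mem_filter, Finset.mem_univ, true_and, Finset.mem_insert, Fin.ext_iff]
        omega
      rw [hfil, Finset.card_insert_of_notMem (by simp)] at ih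
      omega
    · have h2 : Finset.univ.filter (fun i : Fin n => c + 1 ≤ (i : ℕ)) = ∅ := by
        ext i
        simp only [Finset.mem_filter, Finset.mem_univ, true_and, Finset.notMem_empty,
          iff_false, not_le]
        omega
      rw [h2]
      simp
      omega

lemma gam_of_garding {n k : ℕ} (lam : Fin n → ℝ) (hG : lam ∈ GardingCone n k) :
    Gam k ↑(List.ofFn lam) := by
  intro j hj1 hjk
  have h := hG j hj1 hjk
  rw [esym, ← Finset.esymm_map_val, Fin.univ_val_map] at h
  exact h

end Stmt7Aux

open Stmt7Aux in
theorem stmt7 {n : ℕ} (k : ℕ) (hk : 1 ≤ k) (hkn : k ≤ n) (lam : Fin n → ℝ)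
    (hG : lam ∈ GardingCone n k) (hsort : Antitone lam) :
    (Finset.univ.filter (fun i : Fin n => lam i < 0)).card ≤ n - k ∧
    0 < ∑ i ∈ Finset.univ.filter (fun i : Fin n => k - 1 ≤ (i : ℕ)), lam i ∧
    ∀ i : Fin n, k ≤ (i : ℕ) → |lam i| ≤ (n : ℝ) * lam ⟨k - 1, by omega⟩ := by
  have hGam := gam_of_garding lam hG
  obtain ⟨k', rfl⟩ : ∃ k', k = k' + 1 := ⟨k - 1, by omega⟩
  set lamk : ℝ := lam ⟨k', by omega⟩ with hlamk
  -- the second claim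
  have hsum : 0 < ∑ i ∈ Finset.univ.filter (fun i : Fin n => k' + 1 - 1 ≤ (i : ℕ)), lam i := by
    rw [filter_sum_eq_drop]
    exact suffix_sum_pos k' (List.ofFn lam) (by simpa using hkn) hGam
  -- cardinality of the tail set
  have hcardS : (Finset.univ.filter (fun i : Fin n => k' + 1 - 1 ≤ (i : ℕ))).card = n - k' :=
    card_filter_le n k'
  -- each tail entry is at most lamk
  have hub : ∀ j ∈ Finset.univ.filter (fun i : Fin n => k' + 1 - 1 ≤ (i : ℕ)), lam j ≤ lamk := by
    intro j hj
    rw [Finset.mem_filter] at hj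
    exact hsort (by rw [Fin.le_def]; exact hj.2)
  -- lamk is positive
  have hlamkpos : 0 < lamk := by
    by_contra hcon
    push_neg at hcon
    have h1 := Finset.sum_le_card_nsmul _ _ _ hub
    rw [hcardS] at h1
    have h2 : (n - k') • lamk ≤ 0 := by
      rw [nsmul_eq_mul]
      have hh : (0:ℝ) ≤ ((n - k' : ℕ) : ℝ) := Nat.cast_nonneg _
      nlinarith
    linarith
  refine ⟨?_, hsum, ?_⟩
  · -- claim 1
    have hsub : Finset.univ.filter (fun i : Fin n => lam i < 0) ⊆
        Finset.univ.filter (fun i : Fin n => k' + 1 ≤ (i : ℕ)) := by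
      intro i hi
      rw [Finset.mem_filter] at hi ⊢
      refine ⟨Finset.mem_univ _, ?_⟩
      by_contra hcon
      push_neg at hcon
      have : i ≤ (⟨k', by omega⟩ : Fin n) := by rw [Fin.le_def]; simp; omega
      have := hsort this
      rw [← hlamk] at this
      linarith [hi.2]
    have := Finset.card_le_card hsub
    rw [card_filter_le n (k' + 1)] at this
    exact this
  · -- claim 3
    intro i hi
    have himem : i ∈ Finset.univ.filter (fun i : Fin n => k' + 1 - 1 ≤ (i : ℕ)) := by
      rw [Finset.mem_filter]
      exact ⟨Finset.mem_univ _, by omega⟩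
    have hn1 : (1 : ℝ) ≤ (n : ℝ) := by exact_mod_cast Nat.one_le_iff_ne_zero.2 (by omega)
    rw [abs_le]
    have hidx : lam ⟨k' + 1 - 1, by omega⟩ = lamk := rfl
    rw [hidx]
    constructor
    · -- lower bound
      have hsplit : ∑ j ∈ Finset.univ.filter (fun i : Fin n => k' + 1 - 1 ≤ (i : ℕ)), lam j
          = lam i + ∑ j ∈ (Finset.univ.filter
              (fun i : Fin n => k' + 1 - 1 ≤ (i : ℕ))).erase i, lam j :=
        (Finset.add_sum_erase _ _ himem).symm
      have hub' : ∀ j ∈ (Finset.univ.filter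
          (fun i : Fin n => k' + 1 - 1 ≤ (i : ℕ))).erase i, lam j ≤ lamk := fun j hj =>
        hub j (Finset.mem_of_mem_erase hj)
      have h1 := Finset.sum_le_card_nsmul _ _ _ hub'
      have hce : ((Finset.univ.filter (fun i : Fin n => k' + 1 - 1 ≤ (i : ℕ))).erase i).card
          = n - k' - 1 := by
        rw [Finset.card_erase_of_mem himem, hcardS]
      rw [hce] at h1
      have h2 : (n - k' - 1) • lamk ≤ (n : ℝ) * lamk := by
        rw [nsmul_eq_mul]
        apply mul_le_mul_of_nonneg_right _ hlamkpos.le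
        exact Nat.cast_le.2 (by omega)
      linarith [hsum, hsplit, h1, h2]
    · -- upper bound
      have h1 : lam i ≤ lamk := hub i himem
      nlinarith [hlamkpos, hn1, h1]
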